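/- Normalization and seminormalization preserve finite generation: if M is a finitely generated (commutative, cancellative, torsion-free) monoid, then its normalization n(M) and its seminormalization sn(M) are also finitely generated monoids. -/

import Mathlib

section Helpers
variable {V : Type} [AddCommGroup V] [Module ℚ V]

omit [Module ℚ V] in
lemma aux_mem_closure_finset {S : Finset V} {x : V}
    (hx : x ∈ AddSubmonoid.closure (S : Set V)) :
    ∃ a : V → ℕ, x = ∑ v ∈ S, a v • v := by
  classical
  obtain ⟨l, hl, hsum⟩ := AddSubmonoid.exists_multiset_of_mem_closure hx
  have hsub : l.toFinset ⊆ S := fun v hv => hl v (Multiset.mem_toFinset.mp hv)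
  exact ⟨fun v => l.count v, by
    rw [← hsum, Finset.sum_multiset_count_of_subset l S hsub]⟩

omit [Module ℚ V] in
lemma aux_sum_mem_closure (S : Finset V) (a : V → ℕ) :
    (∑ v ∈ S, a v • v) ∈ AddSubmonoid.closure (S : Set V) :=
  sum_mem fun v _ => AddSubmonoid.nsmul_mem _ (AddSubmonoid.subset_closure (by assumption)) _

/-- The "box" spanned by a finite set intersected with the lattice it generates is finite. -/
lemma aux_finite_box (S : Finset V) :
    {z : V | z ∈ Submodule.span ℤ (S : Set V) ∧
      ∃ t : V → ℚ, (∀ v ∈ S, 0 ≤ t v ∧ t v ≤ 1) ∧ z = ∑ v ∈ S, t v • v}.Finite := by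
  classical
  set W := Submodule.span ℤ (S : Set V) with hW
  have hfin : Module.Finite ℤ W := Module.Finite.span_of_finite ℤ S.finite_toSet
  haveI : Module.IsTorsionFree ℤ V := Module.IsTorsionFree.trans (S := ℤ) (R := ℚ)
  obtain ⟨n, b⟩ := Module.basisOfFiniteTypeTorsionFree' (R := ℤ) (M := W)
  set fam : Fin n → V := fun j => (b j : V) with hfam
  have hind : LinearIndependent ℚ fam := by
    rw [← LinearIndependent.iff_fractionRing ℤ ℚ]
    exact b.linearIndependent.map' W.subtype (Submodule.ker_subtype W)
  have hrep : ∀ w : W, (w : V) = ∑ j, (b.repr w j : ℚ) • fam j := by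
    intro w
    conv_lhs => rw [← b.sum_repr w]
    push_cast
    exact Finset.sum_congr rfl fun j _ => (Int.cast_smul_eq_zsmul ℚ _ _).symm
  set crd : V → Fin n → ℤ := fun v j => if hv : v ∈ W then b.repr ⟨v, hv⟩ j else 0 with hcrd
  have hcrd_spec : ∀ v ∈ W, v = ∑ j, (crd v j : ℚ) • fam j := by
    intro v hv
    have := hrep ⟨v, hv⟩
    simpa [hcrd, hv] using this
  have huniq : ∀ q q' : Fin n → ℚ, ∑ j, q j • fam j = ∑ j, q' j • fam j → q = q' := by
    intro q q' h
    funext j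
    have h0 : ∑ i, (q i - q' i) • fam i = 0 := by
      simp [sub_smul, Finset.sum_sub_distrib, h]
    have := Fintype.linearIndependent_iff.mp hind _ h0 j
    linarith [this]
  set C : Fin n → ℤ := fun j => ∑ v ∈ S, |crd v j| with hC
  set Z := {z : V | z ∈ W ∧
      ∃ t : V → ℚ, (∀ v ∈ S, 0 ≤ t v ∧ t v ≤ 1) ∧ z = ∑ v ∈ S, t v • v} with hZ
  have key : ∀ z ∈ Z, ∀ j, crd z j ∈ Set.Icc (-C j) (C j) := by
    rintro z ⟨hzW, t, ht, hzt⟩ j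
    have hz2 : z = ∑ j, (∑ v ∈ S, t v * (crd v j : ℚ)) • fam j := by
      calc z = ∑ v ∈ S, t v • v := hzt
        _ = ∑ v ∈ S, ∑ j, (t v * (crd v j : ℚ)) • fam j := by
            refine Finset.sum_congr rfl fun v hv => ?_
            rw [congrArg (fun w => t v • w) (hcrd_spec v (Submodule.subset_span hv)),
              Finset.smul_sum]
            exact Finset.sum_congr rfl fun j _ => (smul_smul _ _ _)
        _ = ∑ j, ∑ v ∈ S, (t v * (crd v j : ℚ)) • fam j := Finset.sum_comm
        _ = ∑ j, (∑ v ∈ S, t v * (crd v j : ℚ)) • fam j :=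
            Finset.sum_congr rfl fun j _ => (Finset.sum_smul).symm
    have hq : (fun j => (crd z j : ℚ)) = fun j => ∑ v ∈ S, t v * (crd v j : ℚ) :=
      huniq _ _ ((hcrd_spec z hzW).symm.trans hz2)
    have hqj : (crd z j : ℚ) = ∑ v ∈ S, t v * (crd v j : ℚ) := congrFun hq j
    have habs : |(crd z j : ℚ)| ≤ (C j : ℚ) := by
      rw [hqj, hC]
      push_cast
      refine (Finset.abs_sum_le_sum_abs _ _).trans ?_
      refine Finset.sum_le_sum fun v hv => ?_
      rw [abs_mul]
      calc |t v| * |(crd v j : ℚ)| ≤ 1 * |(crd v j : ℚ)| := by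
            refine mul_le_mul_of_nonneg_right ?_ (abs_nonneg _)
            rw [abs_le]; exact ⟨by linarith [(ht v hv).1], (ht v hv).2⟩
        _ = |(crd v j : ℚ)| := one_mul _
    rw [Set.mem_Icc, ← abs_le]
    exact_mod_cast habs
  refine Set.Finite.of_finite_image (f := fun z => crd z) ?_ ?_
  · refine Set.Finite.subset (Set.Finite.pi fun j => Set.finite_Icc (-C j) (C j)) ?_
    rintro g ⟨z, hzZ, rfl⟩
    exact fun j _ => key z hzZ j
  · intro z hz z' hz' h
    have h' : crd z = crd z' := h
    rw [hcrd_spec z hz.1, hcrd_spec z' hz'.1, h']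

/-- Decomposition of an element with a multiple in `M` into a part in `M` and a box part. -/
lemma aux_decomp {M : AddSubmonoid V} {S : Finset V}
    (hS : AddSubmonoid.closure (S : Set V) = M)
    {x : V} {c : ℕ} (hc : 0 < c) (hcx : c • x ∈ M) :
    ∃ y z : V, y ∈ M ∧ x = y + z ∧ c • z ∈ M ∧
      ∃ t : V → ℚ, (∀ v ∈ S, 0 ≤ t v ∧ t v ≤ 1) ∧ z = ∑ v ∈ S, t v • v := by
  classical
  obtain ⟨a, hax⟩ := aux_mem_closure_finset (x := c • x) (by rw [hS]; exact hcx)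
  set y := ∑ v ∈ S, (a v / c) • v with hy
  set z := x - y with hz
  have hyM : y ∈ M := by rw [← hS]; exact aux_sum_mem_closure S _
  have hsplit : c • x = c • y + ∑ v ∈ S, (a v % c) • v := by
    rw [hax, hy, Finset.smul_sum, ← Finset.sum_add_distrib]
    refine Finset.sum_congr rfl fun v _ => ?_
    rw [← mul_smul, ← add_nsmul, Nat.div_add_mod (a v) c]
  have hcz : c • z = ∑ v ∈ S, (a v % c) • v := by
    rw [hz, smul_sub, hsplit]
    abel
  have hczM : c • z ∈ M := by rw [hcz, ← hS]; exact aux_sum_mem_closure S _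
  have hc0 : (c : ℚ) ≠ 0 := Nat.cast_ne_zero.mpr hc.ne'
  refine ⟨y, z, hyM, by rw [hz]; abel, hczM, fun v => ((a v % c : ℕ) : ℚ) / c, ?_, ?_⟩
  · intro v hv
    constructor
    · positivity
    · rw [div_le_one (by exact_mod_cast hc)]
      exact_mod_cast (Nat.mod_lt _ hc).le
  · have hq : (c : ℚ) • z = ∑ v ∈ S, ((a v % c : ℕ) : ℚ) • v := by
      rw [Nat.cast_smul_eq_nsmul, hcz]
      exact Finset.sum_congr rfl fun v _ => (Nat.cast_smul_eq_nsmul ℚ _ _).symm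
    calc z = (c : ℚ)⁻¹ • ((c : ℚ) • z) := (inv_smul_smul₀ hc0 z).symm
      _ = (c : ℚ)⁻¹ • ∑ v ∈ S, ((a v % c : ℕ) : ℚ) • v := by rw [hq]
      _ = ∑ v ∈ S, (((a v % c : ℕ) : ℚ) / c) • v := by
          rw [Finset.smul_sum]
          exact Finset.sum_congr rfl fun v _ => by
            rw [smul_smul, inv_mul_eq_div]

/-- Dickson-type: below any element of a set in `ι → ℕ` there is a minimal element. -/
lemma aux_exists_minimal_le {ι : Type} [Fintype ι] (U : Set (ι → ℕ)) {a : ι → ℕ}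
    (ha : a ∈ U) : ∃ f ∈ U, f ≤ a ∧ ∀ b ∈ U, b ≤ f → b = f := by
  classical
  suffices h : ∀ N (a : ι → ℕ), a ∈ U → ∑ i, a i ≤ N →
      ∃ f ∈ U, f ≤ a ∧ ∀ b ∈ U, b ≤ f → b = f from h _ a ha le_rfl
  intro N
  induction N with
  | zero =>
    intro a ha h0
    refine ⟨a, ha, le_rfl, fun b hb hba => funext fun i => ?_⟩
    have hai : a i = 0 :=
      Finset.sum_eq_zero_iff.mp (Nat.le_zero.mp h0) i (Finset.mem_univ i)
    exact le_antisymm (hai ▸ hba i) (hai ▸ Nat.zero_le _)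
  | succ N ih =>
    intro a ha hN
    by_cases hmin : ∀ b ∈ U, b ≤ a → b = a
    · exact ⟨a, ha, le_rfl, hmin⟩
    · push_neg at hmin
      obtain ⟨b, hbU, hba, hbne⟩ := hmin
      have hex : ∃ i, b i < a i := by
        by_contra hno
        push_neg at hno
        exact hbne (le_antisymm hba fun i => hno i)
      obtain ⟨i0, hi0⟩ := hex
      have hlt : ∑ i, b i < ∑ i, a i :=
        Finset.sum_lt_sum (fun i _ => hba i) ⟨i0, Finset.mem_univ i0, hi0⟩
      obtain ⟨f, hfU, hfb, hfmin⟩ := ih b hbU (by omega)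
      exact ⟨f, hfU, hfb.trans hba, hfmin⟩

end Helpers

/-- The normalization of a monoid `M` (a submonoid of a `ℚ`-vector space, i.e. a
commutative, cancellative, torsion-free monoid): all elements of the group of
differences `gp(M)` having a positive multiple in `M`. -/
def normalization {V : Type} [AddCommGroup V] [Module ℚ V] (M : AddSubmonoid V) :
    AddSubmonoid V where
  carrier := {x | x ∈ AddSubgroup.closure (M : Set V) ∧ ∃ c : ℕ, 0 < c ∧ c • x ∈ M}
  zero_mem' := ⟨AddSubgroup.zero_mem _, 1, Nat.one_pos, by simpa using M.zero_mem⟩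
  add_mem' := by
    rintro x y ⟨hx, c, hc, hcx⟩ ⟨hy, d, hd, hdy⟩
    refine ⟨AddSubgroup.add_mem _ hx hy, c * d, Nat.mul_pos hc hd, ?_⟩
    rw [smul_add]
    refine AddSubmonoid.add_mem _ ?_ ?_
    · rw [mul_comm, mul_smul]; exact AddSubmonoid.nsmul_mem _ hcx d
    · rw [mul_smul]; exact AddSubmonoid.nsmul_mem _ hdy c

/-- The seminormalization of a monoid `M`: all elements `x` of the group of differences
with `2 • x ∈ M` and `3 • x ∈ M`. -/
def seminormalization {V : Type} [AddCommGroup V] [Module ℚ V] (M : AddSubmonoid V) :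
    AddSubmonoid V where
  carrier := {x | x ∈ AddSubgroup.closure (M : Set V) ∧ (2 : ℕ) • x ∈ M ∧ (3 : ℕ) • x ∈ M}
  zero_mem' := ⟨AddSubgroup.zero_mem _, by simpa using M.zero_mem, by simpa using M.zero_mem⟩
  add_mem' := by
    rintro x y ⟨hx, hx2, hx3⟩ ⟨hy, hy2, hy3⟩
    exact ⟨AddSubgroup.add_mem _ hx hy,
      by rw [smul_add]; exact AddSubmonoid.add_mem _ hx2 hy2,
      by rw [smul_add]; exact AddSubmonoid.add_mem _ hx3 hy3⟩

/-- Normalization and seminormalization preserve finite generation. -/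
theorem stmt2 {V : Type} [AddCommGroup V] [Module ℚ V] (M : AddSubmonoid V) (hFG : M.FG) :
    (normalization M).FG ∧ (seminormalization M).FG := by
  classical
  obtain ⟨S, hS⟩ := hFG
  -- the group of differences is the ℤ-span of S
  have hGS : AddSubgroup.closure (M : Set V) = AddSubgroup.closure (S : Set V) := by
    refine le_antisymm ((AddSubgroup.closure_le _).mpr ?_) (AddSubgroup.closure_mono ?_)
    · intro m hm
      rw [← hS] at hm
      exact (AddSubmonoid.closure_le.mpr
        (fun s hs => AddSubgroup.subset_closure hs : (S : Set V) ⊆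
          ((AddSubgroup.closure (S : Set V)).toAddSubmonoid : Set V))) hm
    · intro s hs
      rw [← hS]
      exact AddSubmonoid.subset_closure hs
  have hGW : ∀ x : V, x ∈ AddSubgroup.closure (M : Set V) ↔
      x ∈ Submodule.span ℤ (S : Set V) := by
    intro x
    rw [hGS, ← Submodule.span_int_eq_addSubgroupClosure]
    rfl
  have hMsub : ∀ m ∈ M, m ∈ AddSubgroup.closure (M : Set V) :=
    fun m hm => AddSubgroup.subset_closure hm
  have hMn : (M : Set V) ⊆ (normalization M : Set V) := by
    intro m hm
    exact ⟨hMsub m hm, 1, Nat.one_pos, by simpa using hm⟩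
  have hMsn : (M : Set V) ⊆ (seminormalization M : Set V) := by
    intro m hm
    exact ⟨hMsub m hm, AddSubmonoid.nsmul_mem _ hm 2, AddSubmonoid.nsmul_mem _ hm 3⟩
  set Zbox := {z : V | z ∈ Submodule.span ℤ (S : Set V) ∧
      ∃ t : V → ℚ, (∀ v ∈ S, 0 ≤ t v ∧ t v ≤ 1) ∧ z = ∑ v ∈ S, t v • v} with hZbox
  -- key decomposition within normalization
  have hdec : ∀ x ∈ normalization M, ∀ c : ℕ, 0 < c → c • x ∈ M →
      ∃ y z : V, y ∈ M ∧ x = y + z ∧ z ∈ Zbox ∧ z ∈ normalization M := by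
    rintro x ⟨hxG, -⟩ c hc hcx
    obtain ⟨y, z, hyM, hxyz, hczM, t, ht, hzt⟩ := aux_decomp hS hc hcx
    have hzG : z ∈ AddSubgroup.closure (M : Set V) := by
      have : z = x - y := by rw [hxyz]; abel
      rw [this]
      exact AddSubgroup.sub_mem _ hxG (hMsub y hyM)
    exact ⟨y, z, hyM, hxyz, ⟨(hGW z).mp hzG, t, ht, hzt⟩, hzG, c, hc, hczM⟩
  constructor
  · -- normalization
    rw [AddSubmonoid.fg_iff]
    refine ⟨(S : Set V) ∪ (Zbox ∩ (normalization M : Set V)), ?_, ?_⟩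
    · refine le_antisymm ((AddSubmonoid.closure_le).mpr ?_) ?_
      · rintro v (hv | ⟨-, hv⟩)
        · exact hMn (hS ▸ AddSubmonoid.subset_closure hv)
        · exact hv
      · intro x hx
        obtain ⟨hxG, c, hc, hcx⟩ := hx
        obtain ⟨y, z, hyM, hxyz, hzZ, hzn⟩ := hdec x ⟨hxG, c, hc, hcx⟩ c hc hcx
        rw [hxyz]
        refine AddSubmonoid.add_mem _ ?_ (AddSubmonoid.subset_closure (Or.inr ⟨hzZ, hzn⟩))
        exact AddSubmonoid.closure_mono Set.subset_union_left (hS ▸ hyM)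
    · exact (S.finite_toSet.union ((aux_finite_box S).inter_of_left _))
  · -- seminormalization
    set π : ({v // v ∈ S} → ℕ) → V := fun a => ∑ i, a i • (i : V) with hπ
    have hπM : ∀ a, π a ∈ M := by
      intro a
      rw [← hS]
      exact sum_mem fun i _ => AddSubmonoid.nsmul_mem _ (AddSubmonoid.subset_closure i.2) _
    have hπsurj : ∀ y ∈ M, ∃ a, π a = y := by
      intro y hy
      obtain ⟨a, ha⟩ := aux_mem_closure_finset (S := S) (by rw [hS]; exact hy)
      exact ⟨fun i => a i, by rw [hπ, ha]; exact Finset.sum_coe_sort S (fun v => a v • v)⟩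
    have hπsplit : ∀ f a, f ≤ a → π a = π f + π (a - f) := by
      intro f a hfa
      rw [hπ, ← Finset.sum_add_distrib]
      refine Finset.sum_congr rfl fun i _ => ?_
      rw [Pi.sub_apply, ← add_nsmul, Nat.add_sub_cancel' (hfa i)]
    set U : V → Set ({v // v ∈ S} → ℕ) :=
      fun z => {a | z + π a ∈ seminormalization M} with hU
    set F : V → Set ({v // v ∈ S} → ℕ) :=
      fun z => {a ∈ U z | ∀ b ∈ U z, b ≤ a → b = a} with hF
    have hFfin : ∀ z, (F z).Finite := by
      intro z
      have hpwo : (F z).IsPWO :=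
        Set.isPWO_of_wellQuasiOrderedLE _
      refine IsAntichain.finite_of_partiallyWellOrderedOn (r := (· ≤ ·)) ?_ hpwo
      rintro a ⟨haU, hamin⟩ b ⟨hbU, hbmin⟩ hne hle
      exact hne (hbmin a haU hle)
    rw [AddSubmonoid.fg_iff]
    refine ⟨(S : Set V) ∪ ⋃ z ∈ Zbox, (fun f => z + π f) '' (F z), ?_, ?_⟩
    · refine le_antisymm ((AddSubmonoid.closure_le).mpr ?_) ?_
      · rintro v (hv | hv)
        · exact hMsn (hS ▸ AddSubmonoid.subset_closure hv)
        · simp only [Set.mem_iUnion] at hv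
          obtain ⟨z, hz, f, hf, rfl⟩ := hv
          exact hf.1
      · intro x hx
        obtain ⟨hxG, h2, h3⟩ := hx
        have hxn : x ∈ normalization M := ⟨hxG, 2, by norm_num, h2⟩
        obtain ⟨y, z, hyM, hxyz, hzZ, -⟩ :=
          hdec x hxn 2 (by norm_num) h2
        obtain ⟨a, ha⟩ := hπsurj y hyM
        have haU : a ∈ U z := by
          have : z + π a = x := by rw [ha, hxyz]; abel
          rw [hU]
          show z + π a ∈ seminormalization M
          rw [this]
          exact (⟨hxG, h2, h3⟩ : x ∈ seminormalization M)
        obtain ⟨f, hfU, hfa, hfmin⟩ := aux_exists_minimal_le (U z) haU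
        have hxsplit : x = (z + π f) + π (a - f) := by
          rw [hxyz, ← ha, hπsplit f a hfa]
          abel
        rw [hxsplit]
        refine AddSubmonoid.add_mem _ (AddSubmonoid.subset_closure ?_) ?_
        · refine Or.inr ?_
          simp only [Set.mem_iUnion]
          exact ⟨z, hzZ, f, ⟨hfU, hfmin⟩, rfl⟩
        · exact AddSubmonoid.closure_mono Set.subset_union_left
            (hS ▸ hπM (a - f))
    · refine Set.Finite.union S.finite_toSet ?_
      exact Set.Finite.biUnion (aux_finite_box S) fun z _ => (hFfin z).image _
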